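/- For each k ∈ {0,1,2,3} and all natural numbers p, q with p ≠ 0, q ≠ 0 and p ≠ q, the Cayley–Dickson twist is antisymmetric: ω_k(p,q) = −ω_k(q,p). -/

import Mathlib

/-- The five states of the Cayley–Dickson twist tree:
corner (C), top (T), left (L), diagonal (D) and interior (I). -/
inductive TwistState : Type
  | C | T | L | D | I
deriving DecidableEq

open TwistState

/-- The interior-node sign `i_k(a,b)` for the doubling product `P_k`, `k ∈ {0,1,2,3}`. -/
def iTwist (k : ℕ) (a b : Bool) : ℤ :=
  match k with
  | 0 => if a = false ∧ b = false then -1 else 1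
  | 1 => -1
  | 2 => 1
  | _ => if a = false ∧ b = false then 1 else -1

/-- One step of the twist-tree finite-state computation: from the current
(state, sign) pair, read a doublet of bits `(a, b)` and move to the new
(state, sign) pair. -/
def twistStep (k : ℕ) : TwistState × ℤ → Bool × Bool → TwistState × ℤ
  | (C, s), (false, false) => (C, s)
  | (C, s), (false, true)  => (T, s)
  | (C, s), (true, false)  => (L, s)
  | (C, s), (true, true)   => (D, -s)
  | (T, s), (false, false) => (T, s)
  | (T, s), (false, true)  => (T, s)
  | (T, s), (true, false)  => (I, s)
  | (T, s), (true, true)   => (I, -s)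
  | (L, s), (false, false) => (L, s)
  | (L, s), (false, true)  => (I, -s)
  | (L, s), (true, false)  => (L, s)
  | (L, s), (true, true)   => (I, s)
  | (D, s), (false, false) => (D, s)
  | (D, s), (false, true)  => (I, -s)
  | (D, s), (true, false)  => (I, s)
  | (D, s), (true, true)   => (D, s)
  | (I, s), (a, b)         => (I, s * iTwist k a b)

/-- The Cayley–Dickson twist `ω_k(p,q)` for the doubling product `P_k`:
write `p` and `q` in binary with a common number of bits (padding with
leading zeros), read the doublets of bits from most significant to least
significant, running the twist-tree automaton starting at state `C` with
sign `+1`; the result is the final sign. -/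
def omegaTwist (k : ℕ) (p q : ℕ) : ℤ :=
  (((List.range (max (Nat.size p) (Nat.size q))).reverse.map
      (fun i => (p.testBit i, q.testBit i))).foldl (twistStep k) (C, 1)).2

lemma iTwist_symm (k : ℕ) (a b : Bool) : iTwist k a b = iTwist k b a := by
  rcases k with _ | _ | _ | k <;> cases a <;> cases b <;> simp [iTwist]

/-- The joint invariant relating the run on a doublet list with the run on the
swapped doublet list. -/
def TwInv : TwistState × ℤ → TwistState × ℤ → Prop
  | (s1, σ1), (s2, σ2) =>
    (s1 = C ∧ s2 = C ∧ σ1 = σ2) ∨ (s1 = T ∧ s2 = L ∧ σ1 = σ2) ∨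
    (s1 = L ∧ s2 = T ∧ σ1 = σ2) ∨ (s1 = D ∧ s2 = D ∧ σ1 = σ2) ∨
    (s1 = I ∧ s2 = I ∧ σ1 = -σ2)

lemma twInv_step (k : ℕ) (x y : TwistState × ℤ) (a b : Bool) (h : TwInv x y) :
    TwInv (twistStep k x (a, b)) (twistStep k y (b, a)) := by
  obtain ⟨s1, σ1⟩ := x; obtain ⟨s2, σ2⟩ := y
  rcases h with ⟨h1, h2, h3⟩ | ⟨h1, h2, h3⟩ | ⟨h1, h2, h3⟩ | ⟨h1, h2, h3⟩ | ⟨h1, h2, h3⟩ <;>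
    subst h1 <;> subst h2 <;> subst h3 <;> cases a <;> cases b <;>
    simp [twistStep, TwInv, iTwist_symm k]

lemma twInv_foldl (k : ℕ) (l : List (Bool × Bool)) :
    ∀ x y, TwInv x y → TwInv (l.foldl (twistStep k) x)
      ((l.map (fun p => (p.2, p.1))).foldl (twistStep k) y) := by
  induction l with
  | nil => intro x y h; simpa using h
  | cons hd tl ih =>
    intro x y h
    obtain ⟨a, b⟩ := hd
    simpa using ih _ _ (twInv_step k x y a b h)

lemma state_class (k : ℕ) (l : List (Bool × Bool)) :
    ((l.foldl (twistStep k) (C, 1)).1 = C → ∀ x ∈ l, x = (false, false)) ∧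
    ((l.foldl (twistStep k) (C, 1)).1 = T → ∀ x ∈ l, x.1 = false) ∧
    ((l.foldl (twistStep k) (C, 1)).1 = L → ∀ x ∈ l, x.2 = false) ∧
    ((l.foldl (twistStep k) (C, 1)).1 = D → ∀ x ∈ l, x.1 = x.2) := by
  induction l using List.reverseRecOn with
  | nil => simp
  | append_singleton tl hd ih =>
    obtain ⟨a, b⟩ := hd
    rcases hr : tl.foldl (twistStep k) (C, 1) with ⟨s, σ⟩
    rw [hr] at ih
    rw [List.foldl_append, hr]
    cases s <;> cases a <;> cases b <;> simp_all [twistStep]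

/-- For each `k ∈ {0,1,2,3}` and all natural numbers `p, q` with `p ≠ 0`,
`q ≠ 0` and `p ≠ q`, the Cayley–Dickson twist is antisymmetric:
`ω_k(p,q) = -ω_k(q,p)`. -/
theorem omegaTwist_antisymm :
    ∀ k ∈ ({0, 1, 2, 3} : Finset ℕ), ∀ p q : ℕ, p ≠ 0 → q ≠ 0 → p ≠ q →
      omegaTwist k p q = -omegaTwist k q p := by
  intro k _hk p q hp hq hpq
  have hNc : max (Nat.size q) (Nat.size p) = max (Nat.size p) (Nat.size q) :=
    Nat.max_comm _ _
  set N := max (Nat.size p) (Nat.size q) with hN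
  have hsw : ((List.range N).reverse.map (fun i => (q.testBit i, p.testBit i)))
      = ((List.range N).reverse.map (fun i => (p.testBit i, q.testBit i))).map
        (fun x => (x.2, x.1)) := by
    simp [List.map_map]
  set l := (List.range N).reverse.map (fun i => (p.testBit i, q.testBit i)) with hl
  have hinv := twInv_foldl k l (C, 1) (C, 1) (Or.inl ⟨rfl, rfl, rfl⟩)
  obtain ⟨hC, hT, hL, hD⟩ := state_class k l
  have hmem : ∀ i, i < N → (p.testBit i, q.testBit i) ∈ l := by
    intro i hi
    simp only [hl, List.mem_map, List.mem_reverse, List.mem_range]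
    exact ⟨i, hi, rfl⟩
  have hpbit : ∃ i, i < N ∧ p.testBit i = true := by
    obtain ⟨i, _, hi⟩ := Nat.exists_ge_and_testBit_of_ge_two_pow (n := 0) (Nat.one_le_iff_ne_zero.mpr hp)
    exact ⟨i, lt_of_lt_of_le (Nat.lt_size.mpr (Nat.ge_two_pow_of_testBit hi)) (le_max_left _ _), hi⟩
  have hqbit : ∃ i, i < N ∧ q.testBit i = true := by
    obtain ⟨i, _, hi⟩ := Nat.exists_ge_and_testBit_of_ge_two_pow (n := 0) (Nat.one_le_iff_ne_zero.mpr hq)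
    exact ⟨i, lt_of_lt_of_le (Nat.lt_size.mpr (Nat.ge_two_pow_of_testBit hi)) (le_max_right _ _), hi⟩
  have hstate : (l.foldl (twistStep k) (C, 1)).1 = I := by
    rcases hs : (l.foldl (twistStep k) (C, 1)).1 with _ | _ | _ | _ | _
    · obtain ⟨i, hi, hb⟩ := hpbit
      have := hC hs _ (hmem i hi)
      simp [hb] at this
    · obtain ⟨i, hi, hb⟩ := hpbit
      have := hT hs _ (hmem i hi)
      simp [hb] at this
    · obtain ⟨i, hi, hb⟩ := hqbit
      have := hL hs _ (hmem i hi)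
      simp [hb] at this
    · exfalso; apply hpq
      apply Nat.eq_of_testBit_eq
      intro i
      by_cases hi : i < N
      · exact hD hs _ (hmem i hi)
      · push_neg at hi
        have hpN : p < 2 ^ i := lt_of_lt_of_le (Nat.lt_size_self p)
          (Nat.pow_le_pow_right (by norm_num) (le_trans (le_max_left _ _) hi))
        have hqN : q < 2 ^ i := lt_of_lt_of_le (Nat.lt_size_self q)
          (Nat.pow_le_pow_right (by norm_num) (le_trans (le_max_right _ _) hi))
        rw [Nat.testBit_lt_two_pow hpN, Nat.testBit_lt_two_pow hqN]
    · rfl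
  rcases hr1 : l.foldl (twistStep k) (C, 1) with ⟨s1, σ1⟩
  rcases hr2 : (l.map (fun x => (x.2, x.1))).foldl (twistStep k) (C, 1) with ⟨s2, σ2⟩
  rw [hr1] at hstate hinv
  rw [hr2] at hinv
  simp only at hstate
  subst hstate
  rcases hinv with ⟨h1, _, _⟩ | ⟨h1, _, _⟩ | ⟨h1, _, _⟩ | ⟨h1, _, _⟩ | ⟨_, _, h3⟩ <;>
    try exact absurd h1 (by simp)
  show (l.foldl (twistStep k) (C, 1)).2 = -_
  unfold omegaTwist
  rw [hNc, hsw, hr1, hr2]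
  simpa using h3
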